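/- Let (X, h_i, p_i) be a contracting-on-average iterated function system on a Polish space X with base point x₀ (h_i Lipschitz, p_i Dini and bounded away from 0), and let ν be its unique invariant probability measure. Then ∫_X log⁺(d(x,x₀)) dν(x) < ∞. -/

import Mathlib

open MeasureTheory Metric Filter ENNReal NNReal

noncomputable section

set_option linter.unusedVariables false

lemma aux_exp_le {u : ℝ} (hu : |u| ≤ 1) : Real.exp u ≤ 1 + u + u ^ 2 := by
  have h := Real.exp_bound hu (by norm_num : 0 < 2)
  have hsum : ∑ m ∈ Finset.range 2, u ^ m / (Nat.factorial m : ℝ) = 1 + u := by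
    simp [Finset.sum_range_succ]
  rw [hsum] at h
  have h2 := (abs_le.mp h).2
  have hsq : |u| ^ 2 = u ^ 2 := sq_abs u
  rw [hsq] at h2
  have h3 : ((Nat.succ 2 : ℕ) : ℝ) / ((Nat.factorial 2 : ℕ) * (2:ℕ)) = 3/4 := by
    norm_num [Nat.factorial]
  rw [h3] at h2
  nlinarith [sq_nonneg u]

lemma aux_rpow_add {a b s : ℝ} (ha : 0 ≤ a) (hb : 0 ≤ b) (hs : 0 ≤ s) (hs1 : s ≤ 1) :
    (a + b) ^ s ≤ a ^ s + b ^ s := by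
  have key := NNReal.rpow_add_le_add_rpow a.toNNReal b.toNNReal hs hs1
  calc (a + b) ^ s = ((a.toNNReal + b.toNNReal : ℝ≥0) : ℝ) ^ s := by
        rw [NNReal.coe_add, Real.coe_toNNReal _ ha, Real.coe_toNNReal _ hb]
    _ = (((a.toNNReal + b.toNNReal) ^ s : ℝ≥0) : ℝ) := (NNReal.coe_rpow _ _).symm
    _ ≤ ((a.toNNReal ^ s + b.toNNReal ^ s : ℝ≥0) : ℝ) := NNReal.coe_le_coe.mpr key
    _ = a ^ s + b ^ s := by
        rw [NNReal.coe_add, NNReal.coe_rpow, NNReal.coe_rpow,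
          Real.coe_toNNReal _ ha, Real.coe_toNNReal _ hb]

lemma aux_logplus_le {t s : ℝ} (ht : 0 ≤ t) (hs : 0 < s) :
    max (Real.log t) 0 ≤ s⁻¹ * t ^ s := by
  have hRnn : 0 ≤ s⁻¹ * t ^ s := mul_nonneg (by positivity) (Real.rpow_nonneg ht s)
  refine max_le ?_ hRnn
  rcases eq_or_lt_of_le ht with h0 | h0
  · rw [← h0]; simp [Real.log_zero, Real.zero_rpow hs.ne']
  · have h1 : Real.log (t ^ s) = s * Real.log t := Real.log_rpow h0 s
    have h2 : Real.log (t ^ s) ≤ t ^ s - 1 :=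
      Real.log_le_sub_one_of_pos (Real.rpow_pos_of_pos h0 s)
    have : s * Real.log t ≤ t ^ s := by
      rw [← h1]; linarith [Real.rpow_nonneg ht s]
    calc Real.log t = s⁻¹ * (s * Real.log t) := by field_simp
      _ ≤ s⁻¹ * t ^ s := by
          exact mul_le_mul_of_nonneg_left this (by positivity)

lemma aux_clip {k : ℕ} (p ℓ : Fin k → ℝ) {δ b T : ℝ} (hδ : 0 < δ) (hb : 0 < b) (hT : 0 ≤ T)
    (hp0 : ∀ j, δ ≤ p j) (hp1 : ∑ j, p j = 1) (hℓT : ∀ j, ℓ j ≤ T)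
    (hsum : ∑ j, p j * ℓ j ≤ -b) :
    ∑ j, p j * max (ℓ j) (-((T + b) / δ)) ≤ -b := by
  set A : ℝ := (T + b) / δ with hAdef
  have hA : 0 < A := div_pos (by linarith) hδ
  have hpn : ∀ j, 0 ≤ p j := fun j => hδ.le.trans (hp0 j)
  by_cases hall : ∀ j, -A ≤ ℓ j
  · have he : ∀ j, max (ℓ j) (-A) = ℓ j := fun j => max_eq_left (hall j)
    simp only [he]
    exact hsum
  · push_neg at hall
    obtain ⟨j₀, hj₀⟩ := hall
    have hmem : j₀ ∈ (Finset.univ : Finset (Fin k)) := Finset.mem_univ _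
    have hsplit := Finset.add_sum_erase Finset.univ
      (fun j => p j * max (ℓ j) (-A)) hmem
    have hmax0 : max (ℓ j₀) (-A) = -A := max_eq_right hj₀.le
    have h1 : p j₀ * max (ℓ j₀) (-A) ≤ -(T + b) := by
      rw [hmax0]
      have := mul_le_mul_of_nonpos_right (hp0 j₀) (neg_nonpos.mpr hA.le)
      calc p j₀ * -A ≤ δ * -A := this
        _ = -(T + b) := by rw [hAdef]; field_simp
    have h2 : ∑ j ∈ Finset.univ.erase j₀, p j * max (ℓ j) (-A) ≤ T := by
      have step1 : ∑ j ∈ Finset.univ.erase j₀, p j * max (ℓ j) (-A)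
          ≤ ∑ j ∈ Finset.univ.erase j₀, p j * T := by
        refine Finset.sum_le_sum fun j _ => ?_
        refine mul_le_mul_of_nonneg_left ?_ (hpn j)
        exact max_le (hℓT j) (le_trans (neg_nonpos.mpr hA.le) hT)
      have step2 : ∑ j ∈ Finset.univ.erase j₀, p j * T ≤ T := by
        rw [← Finset.sum_mul]
        have hsub : ∑ j ∈ Finset.univ.erase j₀, p j ≤ 1 := by
          rw [← hp1]
          exact Finset.sum_le_sum_of_subset_of_nonneg (Finset.erase_subset _ _)
            (fun j _ _ => hpn j)
        nlinarith [Finset.sum_nonneg (fun j (_ : j ∈ Finset.univ.erase j₀) => hpn j)]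
      exact step1.trans step2
    calc ∑ j, p j * max (ℓ j) (-A)
        = p j₀ * max (ℓ j₀) (-A) + ∑ j ∈ Finset.univ.erase j₀, p j * max (ℓ j) (-A) :=
          hsplit.symm
      _ ≤ -(T + b) + T := add_le_add h1 h2
      _ = -b := by ring

lemma aux_contract {X : Type*} [MetricSpace X] {k : ℕ} (h : Fin k → X → X) (p : Fin k → X → ℝ)
    {δ b Lmax s : ℝ} (hδ : 0 < δ) (hb : 0 < b) (hLmax : 0 ≤ Lmax)
    (hp0 : ∀ i x, δ ≤ p i x) (hpsum : ∀ x, ∑ i, p i x = 1)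
    (hLip : ∀ i (x y : X), dist (h i x) (h i y) ≤ Lmax * dist x y)
    (hcoa : ∀ x y, x ≠ y → ∑ j, p j x * Real.log (dist (h j x) (h j y) / dist x y) ≤ -b)
    (hs0 : 0 < s)
    (hsA : s * ((Real.log (Lmax + 1) + b) / δ + Real.log (Lmax + 1) + 1) ≤ 1)
    (hsA2 : s * ((Real.log (Lmax + 1) + b) / δ + Real.log (Lmax + 1) + 1) ^ 2 ≤ b / 2) :
    ∀ x y : X, ∑ j, p j x * dist (h j x) (h j y) ^ s ≤ (1 - s * b / 2) * dist x y ^ s := by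
  set T : ℝ := Real.log (Lmax + 1) with hTdef
  have hT0 : 0 ≤ T := Real.log_nonneg (by linarith)
  set A : ℝ := (T + b) / δ with hAdef
  have hA : 0 < A := div_pos (by linarith) hδ
  set A' : ℝ := A + T + 1 with hA'def
  have hA'0 : 0 < A' := by positivity
  intro x y
  rcases eq_or_ne x y with rfl | hne
  · simp [Real.zero_rpow hs0.ne']
  · have hd : 0 < dist x y := dist_pos.mpr hne
    set d : ℝ := dist x y with hddef
    set r : Fin k → ℝ := fun j => dist (h j x) (h j y) / d with hrdef
    have hr0 : ∀ j, 0 ≤ r j := fun j => div_nonneg dist_nonneg hd.le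
    set ℓ : Fin k → ℝ := fun j => Real.log (r j) with hℓdef
    have hℓT : ∀ j, ℓ j ≤ T := by
      intro j
      rcases eq_or_lt_of_le (hr0 j) with h0 | h0
      · simp only [hℓdef, ← h0, Real.log_zero]; exact hT0
      · have hrle : r j ≤ Lmax + 1 := by
          have : r j ≤ Lmax := by
            rw [hrdef]; simp only
            rw [div_le_iff₀ hd]; exact hLip j x y
          linarith
        exact Real.log_le_log h0 hrle
    have hpn : ∀ j, 0 ≤ p j x := fun j => hδ.le.trans (hp0 j x)
    have hsumℓ : ∑ j, p j x * ℓ j ≤ -b := hcoa x y hne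
    set ℓb : Fin k → ℝ := fun j => max (ℓ j) (-A) with hℓbdef
    have hclip : ∑ j, p j x * ℓb j ≤ -b :=
      aux_clip (fun j => p j x) ℓ hδ hb hT0 (fun j => hp0 j x) (hpsum x) hℓT hsumℓ
    have hℓb_abs : ∀ j, |ℓb j| ≤ A' := by
      intro j
      rw [abs_le]
      constructor
      · simp only [hℓbdef]
        have : -A ≤ max (ℓ j) (-A) := le_max_right _ _
        linarith
      · simp only [hℓbdef]
        have : max (ℓ j) (-A) ≤ T := max_le (hℓT j) (by linarith)
        linarith
    have hterm : ∀ j, r j ^ s ≤ 1 + s * ℓb j + (s * ℓb j) ^ 2 := by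
      intro j
      have hexp : r j ^ s ≤ Real.exp (s * ℓb j) := by
        rcases eq_or_lt_of_le (hr0 j) with h0 | h0
        · rw [← h0, Real.zero_rpow hs0.ne']
          exact (Real.exp_pos _).le
        · rw [Real.rpow_def_of_pos h0]
          apply Real.exp_le_exp.mpr
          rw [mul_comm]
          exact mul_le_mul_of_nonneg_left (le_max_left _ _) hs0.le
      have habs : |s * ℓb j| ≤ 1 := by
        rw [abs_mul, abs_of_nonneg hs0.le]
        calc s * |ℓb j| ≤ s * A' := mul_le_mul_of_nonneg_left (hℓb_abs j) hs0.le
          _ ≤ 1 := hsA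
      exact hexp.trans (aux_exp_le habs)
    have hmain : ∑ j, p j x * r j ^ s ≤ 1 - s * b / 2 := by
      have step1 : ∑ j, p j x * r j ^ s
          ≤ ∑ j, (p j x + s * (p j x * ℓb j) + p j x * (s * ℓb j) ^ 2) := by
        refine Finset.sum_le_sum fun j _ => ?_
        have := mul_le_mul_of_nonneg_left (hterm j) (hpn j)
        calc p j x * r j ^ s ≤ p j x * (1 + s * ℓb j + (s * ℓb j) ^ 2) := this
          _ = p j x + s * (p j x * ℓb j) + p j x * (s * ℓb j) ^ 2 := by ring
      have step2 : ∑ j, (p j x + s * (p j x * ℓb j) + p j x * (s * ℓb j) ^ 2)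
          = (∑ j, p j x) + s * (∑ j, p j x * ℓb j) + ∑ j, p j x * (s * ℓb j) ^ 2 := by
        rw [Finset.sum_add_distrib, Finset.sum_add_distrib, Finset.mul_sum]
      have step3 : ∑ j, p j x * (s * ℓb j) ^ 2 ≤ s * (b / 2) := by
        have each : ∀ j, p j x * (s * ℓb j) ^ 2 ≤ p j x * (s * (s * A' ^ 2)) := by
          intro j
          refine mul_le_mul_of_nonneg_left ?_ (hpn j)
          have h1 : (ℓb j) ^ 2 ≤ A' ^ 2 := by
            rw [← sq_abs]
            exact pow_le_pow_left₀ (abs_nonneg _) (hℓb_abs j) 2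
          calc (s * ℓb j) ^ 2 = s * (s * (ℓb j) ^ 2) := by ring
            _ ≤ s * (s * A' ^ 2) := by
                refine mul_le_mul_of_nonneg_left ?_ hs0.le
                exact mul_le_mul_of_nonneg_left h1 hs0.le
        calc ∑ j, p j x * (s * ℓb j) ^ 2 ≤ ∑ j, p j x * (s * (s * A' ^ 2)) :=
              Finset.sum_le_sum fun j _ => each j
          _ = (∑ j, p j x) * (s * (s * A' ^ 2)) := by rw [Finset.sum_mul]
          _ = s * (s * A' ^ 2) := by rw [hpsum x, one_mul]
          _ ≤ s * (b / 2) := mul_le_mul_of_nonneg_left hsA2 hs0.le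
      have step4 : s * (∑ j, p j x * ℓb j) ≤ s * (-b) :=
        mul_le_mul_of_nonneg_left hclip hs0.le
      calc ∑ j, p j x * r j ^ s
          ≤ (∑ j, p j x) + s * (∑ j, p j x * ℓb j) + ∑ j, p j x * (s * ℓb j) ^ 2 := by
            rw [← step2]; exact step1
        _ ≤ 1 + s * (-b) + s * (b / 2) := by
            rw [hpsum x]
            exact add_le_add (add_le_add le_rfl step4) step3
        _ = 1 - s * b / 2 := by ring
    have hfin : ∀ j, p j x * dist (h j x) (h j y) ^ s = p j x * r j ^ s * d ^ s := by
      intro j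
      have hdist : dist (h j x) (h j y) = r j * d := by
        rw [hrdef]; simp only
        rw [div_mul_cancel₀ _ hd.ne']
      rw [hdist, Real.mul_rpow (hr0 j) hd.le, mul_assoc]
    calc ∑ j, p j x * dist (h j x) (h j y) ^ s
        = (∑ j, p j x * r j ^ s) * d ^ s := by
          simp_rw [hfin]; rw [Finset.sum_mul]
      _ ≤ (1 - s * b / 2) * d ^ s :=
          mul_le_mul_of_nonneg_right hmain (Real.rpow_nonneg hd.le s)

/-- The invariant measure of a contracting-on-average IFS integrates `log⁺` of the
distance to a base point. -/
theorem logplus_integrable_invariant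
    (X : Type*) [MetricSpace X] [CompleteSpace X] [TopologicalSpace.SeparableSpace X]
    [MeasurableSpace X] [BorelSpace X] (x₀ : X)
    (k : ℕ) (hk : 2 ≤ k) (h : Fin k → X → X) (p : Fin k → X → ℝ)
    (hlip : ∀ i, ∃ L : ℝ≥0, LipschitzWith L (h i))
    (hprange : ∀ i x, p i x ∈ Set.Ioo (0 : ℝ) 1)
    (hpbelow : ∃ δ > (0 : ℝ), ∀ i x, δ ≤ p i x)
    (hpsum : ∀ x, ∑ i, p i x = 1)
    (hdini : ∀ i, ∃ w : ℝ → ℝ, Monotone w ∧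
      (∀ x y : X, |p i x - p i y| ≤ w (dist x y)) ∧
      Summable fun n : ℕ => w ((1 / 2 : ℝ) ^ (n + 1)))
    (hcoa : ∃ b > (0 : ℝ), ∀ x y, x ≠ y →
      ∑ j, p j x * Real.log (dist (h j x) (h j y) / dist x y) < -b)
    (ν : Measure X) [IsProbabilityMeasure ν]
    (hinv : ν = ∑ i, Measure.map (h i)
      (ν.withDensity fun x => ENNReal.ofReal (p i x))) :
    ∫⁻ x, ENNReal.ofReal (max (Real.log (dist x x₀)) 0) ∂ν < ⊤ := by
  obtain ⟨δ, hδ, hp0⟩ := hpbelow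
  obtain ⟨b, hb, hcoa'⟩ := hcoa
  choose L hL using hlip
  set Lmax : ℝ := ∑ i, (L i : ℝ) with hLmaxdef
  have hLmax0 : 0 ≤ Lmax := Finset.sum_nonneg fun i _ => (L i).coe_nonneg
  have hLip : ∀ i (x y : X), dist (h i x) (h i y) ≤ Lmax * dist x y := by
    intro i x y
    calc dist (h i x) (h i y) ≤ (L i : ℝ) * dist x y := (hL i).dist_le_mul x y
      _ ≤ Lmax * dist x y := by
          refine mul_le_mul_of_nonneg_right ?_ dist_nonneg
          exact Finset.single_le_sum (fun j _ => (L j).coe_nonneg) (Finset.mem_univ i)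
  set A' : ℝ := (Real.log (Lmax + 1) + b) / δ + Real.log (Lmax + 1) + 1 with hA'def
  have hT0 : 0 ≤ Real.log (Lmax + 1) := Real.log_nonneg (by linarith)
  have hA'1 : 1 ≤ A' := by
    have : 0 < (Real.log (Lmax + 1) + b) / δ := div_pos (by linarith) hδ
    rw [hA'def]; linarith
  have hA'0 : 0 < A' := lt_of_lt_of_le one_pos hA'1
  set s : ℝ := min (min (b / (2 * A' ^ 2)) (1 / A')) (1 / b) with hsdef
  have hs0 : 0 < s := by
    refine lt_min (lt_min ?_ ?_) ?_ <;> positivity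
  have hs1 : s ≤ 1 := by
    have h1 : s ≤ 1 / A' := le_trans (min_le_left _ _) (min_le_right _ _)
    have h2 : 1 / A' ≤ 1 := by
      rw [div_le_one hA'0]; exact hA'1
    linarith
  have hsA : s * A' ≤ 1 := by
    have h1 : s ≤ 1 / A' := le_trans (min_le_left _ _) (min_le_right _ _)
    calc s * A' ≤ (1 / A') * A' := mul_le_mul_of_nonneg_right h1 hA'0.le
      _ = 1 := by field_simp
  have hsA2 : s * A' ^ 2 ≤ b / 2 := by
    have h1 : s ≤ b / (2 * A' ^ 2) := le_trans (min_le_left _ _) (min_le_left _ _)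
    calc s * A' ^ 2 ≤ (b / (2 * A' ^ 2)) * A' ^ 2 := by
          exact mul_le_mul_of_nonneg_right h1 (by positivity)
      _ = b / 2 := by field_simp
  have hsb : s * b ≤ 1 := by
    have h1 : s ≤ 1 / b := min_le_right _ _
    calc s * b ≤ (1 / b) * b := mul_le_mul_of_nonneg_right h1 hb.le
      _ = 1 := by field_simp
  set ρ : ℝ := 1 - s * b / 2 with hρdef
  have hρ0 : 0 ≤ ρ := by rw [hρdef]; linarith
  have hρ1 : ρ < 1 := by
    have : 0 < s * b := mul_pos hs0 hb
    rw [hρdef]; linarith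
  have h1ρ : 0 < 1 - ρ := by linarith
  have hcontract : ∀ x y : X,
      ∑ j, p j x * dist (h j x) (h j y) ^ s ≤ ρ * dist x y ^ s :=
    aux_contract h p hδ hb hLmax0 hp0 hpsum hLip
      (fun x y hxy => (hcoa' x y hxy).le) hs0 hsA hsA2
  -- basic positivity facts
  have hpn : ∀ j (x : X), 0 ≤ p j x := fun j x => hδ.le.trans (hp0 j x)
  have hple1 : ∀ j (x : X), p j x ≤ 1 := by
    intro j x
    calc p j x ≤ ∑ i, p i x :=
          Finset.single_le_sum (fun i _ => hpn i x) (Finset.mem_univ j)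
      _ = 1 := hpsum x
  -- continuity and measurability of the weights
  have hpcont : ∀ i, Continuous (p i) := by
    intro i
    obtain ⟨w, hwmono, hwbound, hwsum⟩ := hdini i
    rw [Metric.continuous_iff]
    intro x ε hε
    have hlim : Tendsto (fun n : ℕ => w ((1 / 2 : ℝ) ^ (n + 1))) atTop (nhds 0) :=
      hwsum.tendsto_atTop_zero
    obtain ⟨n, hn⟩ := (hlim.eventually (gt_mem_nhds hε)).exists
    refine ⟨(1 / 2 : ℝ) ^ (n + 1), by positivity, fun y hy => ?_⟩
    rw [Real.dist_eq]
    calc |p i y - p i x| ≤ w (dist y x) := hwbound y x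
      _ ≤ w ((1 / 2 : ℝ) ^ (n + 1)) := hwmono hy.le
      _ < ε := hn
  have hpmeas : ∀ i, Measurable (p i) := fun i => (hpcont i).measurable
  have hhmeas : ∀ i, Measurable (h i) := fun i => (hL i).continuous.measurable
  -- the Lyapunov function
  set V : X → ℝ≥0∞ := fun x => ENNReal.ofReal (dist x x₀ ^ s) with hVdef
  have hVcont : Continuous V := by
    apply ENNReal.continuous_ofReal.comp
    exact (continuous_id.dist continuous_const).rpow_const (fun x => Or.inr hs0.le)
  have hVmeas : Measurable V := hVcont.measurable
  have hVlt : ∀ x, V x < ⊤ := fun x => ENNReal.ofReal_lt_top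
  -- the transfer operator
  set Pe : (X → ℝ≥0∞) → X → ℝ≥0∞ :=
    fun f x => ∑ j, ENNReal.ofReal (p j x) * f (h j x) with hPedef
  have hPemeas : ∀ f : X → ℝ≥0∞, Measurable f → Measurable (Pe f) := by
    intro f hf
    exact Finset.measurable_sum _ fun j _ =>
      (ENNReal.measurable_ofReal.comp (hpmeas j)).mul (hf.comp (hhmeas j))
  have hPemono : ∀ f g : X → ℝ≥0∞, (∀ x, f x ≤ g x) → ∀ x, Pe f x ≤ Pe g x :=
    fun f g hfg x => Finset.sum_le_sum fun j _ => mul_le_mul_right (hfg (h j x)) _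
  have hPesum1 : ∀ x, ∑ j, ENNReal.ofReal (p j x) = 1 := by
    intro x
    rw [← ENNReal.ofReal_sum_of_nonneg (fun i _ => hpn i x), hpsum x, ENNReal.ofReal_one]
  have hPeconst : ∀ (c : ℝ≥0∞) (x : X), Pe (fun _ => c) x = c := by
    intro c x
    simp only [hPedef]
    rw [← Finset.sum_mul, hPesum1 x, one_mul]
  have hPeaffine : ∀ (a c : ℝ≥0∞) (f : X → ℝ≥0∞) (x : X),
      Pe (fun y => a * f y + c) x = a * Pe f x + c := by
    intro a c f x
    simp only [hPedef]
    calc ∑ j, ENNReal.ofReal (p j x) * (a * f (h j x) + c)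
        = ∑ j, (a * (ENNReal.ofReal (p j x) * f (h j x)) + ENNReal.ofReal (p j x) * c) := by
          refine Finset.sum_congr rfl fun j _ => ?_
          ring
      _ = a * ∑ j, ENNReal.ofReal (p j x) * f (h j x)
            + (∑ j, ENNReal.ofReal (p j x)) * c := by
          rw [Finset.sum_add_distrib, Finset.mul_sum, Finset.sum_mul]
      _ = a * ∑ j, ENNReal.ofReal (p j x) * f (h j x) + c := by
          rw [hPesum1 x, one_mul]
  -- invariance of ν under the transfer operator
  have hinvar : ∀ f : X → ℝ≥0∞, Measurable f →
      ∫⁻ x, f x ∂ν = ∫⁻ x, Pe f x ∂ν := by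
    intro f hf
    conv_lhs => rw [hinv]
    rw [lintegral_finset_sum_measure]
    have heach : ∀ i, ∫⁻ x, f x
        ∂(Measure.map (h i) (ν.withDensity fun x => ENNReal.ofReal (p i x)))
        = ∫⁻ x, ENNReal.ofReal (p i x) * f (h i x) ∂ν := by
      intro i
      have hg : Measurable fun a : X => f (h i a) := hf.comp (hhmeas i)
      have hq : Measurable fun a : X => ENNReal.ofReal (p i a) :=
        ENNReal.measurable_ofReal.comp (hpmeas i)
      rw [lintegral_map hf (hhmeas i), lintegral_withDensity_eq_lintegral_mul ν hq hg]
      rfl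
    simp_rw [heach]
    have hFmeas : ∀ j ∈ (Finset.univ : Finset (Fin k)),
        Measurable fun x : X => ENNReal.ofReal (p j x) * f (h j x) :=
      fun j _ => (ENNReal.measurable_ofReal.comp (hpmeas j)).mul (hf.comp (hhmeas j))
    exact (lintegral_finset_sum Finset.univ hFmeas).symm
  -- the drift inequality
  set C : ℝ := ∑ j, dist (h j x₀) x₀ ^ s with hCdef
  have hC0 : 0 ≤ C :=
    Finset.sum_nonneg fun j _ => Real.rpow_nonneg dist_nonneg s
  have hrdrift : ∀ x : X,
      ∑ j, p j x * dist (h j x) x₀ ^ s ≤ ρ * dist x x₀ ^ s + C := by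
    intro x
    have hterm : ∀ j, p j x * dist (h j x) x₀ ^ s
        ≤ p j x * dist (h j x) (h j x₀) ^ s + dist (h j x₀) x₀ ^ s := by
      intro j
      have tri : dist (h j x) x₀ ≤ dist (h j x) (h j x₀) + dist (h j x₀) x₀ :=
        dist_triangle _ _ _
      have h1 : dist (h j x) x₀ ^ s
          ≤ dist (h j x) (h j x₀) ^ s + dist (h j x₀) x₀ ^ s :=
        (Real.rpow_le_rpow dist_nonneg tri hs0.le).trans
          (aux_rpow_add dist_nonneg dist_nonneg hs0.le hs1)
      calc p j x * dist (h j x) x₀ ^ s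
          ≤ p j x * (dist (h j x) (h j x₀) ^ s + dist (h j x₀) x₀ ^ s) :=
            mul_le_mul_of_nonneg_left h1 (hpn j x)
        _ = p j x * dist (h j x) (h j x₀) ^ s + p j x * dist (h j x₀) x₀ ^ s := by ring
        _ ≤ p j x * dist (h j x) (h j x₀) ^ s + dist (h j x₀) x₀ ^ s := by
            have := mul_le_mul_of_nonneg_right (hple1 j x)
              (Real.rpow_nonneg (dist_nonneg (x := h j x₀) (y := x₀)) s)
            linarith [this]
    calc ∑ j, p j x * dist (h j x) x₀ ^ s
        ≤ ∑ j, (p j x * dist (h j x) (h j x₀) ^ s + dist (h j x₀) x₀ ^ s) :=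
          Finset.sum_le_sum fun j _ => hterm j
      _ = (∑ j, p j x * dist (h j x) (h j x₀) ^ s) + C := by
          rw [Finset.sum_add_distrib, hCdef]
      _ ≤ ρ * dist x x₀ ^ s + C := by
          have := hcontract x x₀
          linarith
  have hdrift : ∀ x : X, Pe V x ≤ ENNReal.ofReal ρ * V x + ENNReal.ofReal C := by
    intro x
    have e1 : Pe V x = ENNReal.ofReal (∑ j, p j x * dist (h j x) x₀ ^ s) := by
      rw [ENNReal.ofReal_sum_of_nonneg (fun j _ =>
        mul_nonneg (hpn j x) (Real.rpow_nonneg dist_nonneg s))]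
      simp only [hPedef, hVdef]
      refine Finset.sum_congr rfl fun j _ => ?_
      rw [ENNReal.ofReal_mul (hpn j x)]
    rw [e1]
    calc ENNReal.ofReal (∑ j, p j x * dist (h j x) x₀ ^ s)
        ≤ ENNReal.ofReal (ρ * dist x x₀ ^ s + C) :=
          ENNReal.ofReal_le_ofReal (hrdrift x)
      _ = ENNReal.ofReal (ρ * dist x x₀ ^ s) + ENNReal.ofReal C := by
          rw [ENNReal.ofReal_add (mul_nonneg hρ0 (Real.rpow_nonneg dist_nonneg s)) hC0]
      _ = ENNReal.ofReal ρ * V x + ENNReal.ofReal C := by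
          rw [ENNReal.ofReal_mul hρ0]
  -- iterating the drift inequality
  set K : ℝ≥0∞ := ENNReal.ofReal (C / (1 - ρ)) with hKdef
  have hgeom : ∀ n : ℕ, C * (∑ i ∈ Finset.range n, ρ ^ i) ≤ C / (1 - ρ) := by
    intro n
    have hS : ∑ i ∈ Finset.range n, ρ ^ i ≤ 1 / (1 - ρ) := by
      rw [geom_sum_eq hρ1.ne n]
      have he : (ρ ^ n - 1) / (ρ - 1) = (1 - ρ ^ n) / (1 - ρ) := by
        rw [← neg_div_neg_eq, neg_sub, neg_sub]
      rw [he, div_le_div_iff₀ h1ρ h1ρ]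
      nlinarith [pow_nonneg hρ0 n]
    calc C * (∑ i ∈ Finset.range n, ρ ^ i) ≤ C * (1 / (1 - ρ)) :=
          mul_le_mul_of_nonneg_left hS hC0
      _ = C / (1 - ρ) := by field_simp
  have hiter : ∀ n : ℕ, ∀ x : X, (Pe^[n]) V x
      ≤ ENNReal.ofReal (ρ ^ n) * V x
        + ENNReal.ofReal (C * ∑ i ∈ Finset.range n, ρ ^ i) := by
    intro n
    induction n with
    | zero => intro x; simp
    | succ n ih =>
      intro x
      have hSn0 : 0 ≤ ∑ i ∈ Finset.range n, ρ ^ i :=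
        Finset.sum_nonneg fun i _ => pow_nonneg hρ0 i
      rw [Function.iterate_succ_apply']
      calc Pe (Pe^[n] V) x
          ≤ Pe (fun y => ENNReal.ofReal (ρ ^ n) * V y
              + ENNReal.ofReal (C * ∑ i ∈ Finset.range n, ρ ^ i)) x :=
            hPemono _ _ ih x
        _ = ENNReal.ofReal (ρ ^ n) * Pe V x
              + ENNReal.ofReal (C * ∑ i ∈ Finset.range n, ρ ^ i) :=
            hPeaffine _ _ _ _
        _ ≤ ENNReal.ofReal (ρ ^ n) * (ENNReal.ofReal ρ * V x + ENNReal.ofReal C)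
              + ENNReal.ofReal (C * ∑ i ∈ Finset.range n, ρ ^ i) :=
            add_le_add_left (mul_le_mul_right (hdrift x) _) _
        _ = ENNReal.ofReal (ρ ^ (n + 1)) * V x
              + (ENNReal.ofReal (ρ ^ n * C)
                + ENNReal.ofReal (C * ∑ i ∈ Finset.range n, ρ ^ i)) := by
            rw [mul_add, ← mul_assoc, ← ENNReal.ofReal_mul (pow_nonneg hρ0 n),
              ← ENNReal.ofReal_mul (pow_nonneg hρ0 n), ← pow_succ ρ n, add_assoc]
        _ = ENNReal.ofReal (ρ ^ (n + 1)) * V x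
              + ENNReal.ofReal (C * ∑ i ∈ Finset.range (n + 1), ρ ^ i) := by
            rw [← ENNReal.ofReal_add (mul_nonneg (pow_nonneg hρ0 n) hC0)
              (mul_nonneg hC0 hSn0), Finset.sum_range_succ]
            exact congrArg (fun t => ENNReal.ofReal (ρ ^ (n+1)) * V x + ENNReal.ofReal t)
              (by ring)
  have hiterK : ∀ n : ℕ, ∀ x : X,
      (Pe^[n]) V x ≤ ENNReal.ofReal (ρ ^ n) * V x + K := by
    intro n x
    exact (hiter n x).trans (add_le_add_right (ENNReal.ofReal_le_ofReal (hgeom n)) _)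
  -- iterates of the transfer operator
  have hiter_mono : ∀ n : ℕ, ∀ f g : X → ℝ≥0∞, (∀ x, f x ≤ g x) →
      ∀ x, (Pe^[n]) f x ≤ (Pe^[n]) g x := by
    intro n
    induction n with
    | zero => intro f g hfg x; exact hfg x
    | succ n ih =>
      intro f g hfg x
      rw [Function.iterate_succ_apply', Function.iterate_succ_apply']
      exact hPemono _ _ (ih f g hfg) x
  have hiter_meas : ∀ n : ℕ, ∀ f : X → ℝ≥0∞, Measurable f →
      Measurable ((Pe^[n]) f) := by
    intro n
    induction n with
    | zero => intro f hf; exact hf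
    | succ n ih =>
      intro f hf
      rw [Function.iterate_succ_apply']
      exact hPemeas _ (ih f hf)
  have hiter_const : ∀ n : ℕ, ∀ (c : ℝ≥0∞) (f : X → ℝ≥0∞), (∀ x, f x ≤ c) →
      ∀ x, (Pe^[n]) f x ≤ c := by
    intro n
    induction n with
    | zero => intro c f hfc x; exact hfc x
    | succ n ih =>
      intro c f hfc x
      rw [Function.iterate_succ_apply']
      calc Pe ((Pe^[n]) f) x ≤ Pe (fun _ => c) x := hPemono _ _ (ih c f hfc) x
        _ = c := hPeconst c x
  have hinv_iter : ∀ n : ℕ, ∀ f : X → ℝ≥0∞, Measurable f →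
      ∫⁻ x, f x ∂ν = ∫⁻ x, (Pe^[n]) f x ∂ν := by
    intro n
    induction n with
    | zero => intro f hf; rfl
    | succ n ih =>
      intro f hf
      rw [ih f hf, hinvar _ (hiter_meas n f hf)]
      simp_rw [← Function.iterate_succ_apply' Pe n f]
  -- uniform bound on the truncated integrals
  have hbound : ∀ N : ℕ, ∫⁻ x, min (V x) N ∂ν ≤ K := by
    intro N
    set f : X → ℝ≥0∞ := fun x => min (V x) N with hfdef
    have hfmeas : Measurable f := hVmeas.min measurable_const
    have hfV : ∀ x, f x ≤ V x := fun x => min_le_left _ _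
    have hfN : ∀ x, f x ≤ N := fun x => min_le_right _ _
    have key : ∀ n : ℕ, ∫⁻ x, f x ∂ν
        ≤ ∫⁻ x, min (ENNReal.ofReal (ρ ^ n) * V x + K) N ∂ν := by
      intro n
      rw [hinv_iter n f hfmeas]
      refine lintegral_mono fun x => ?_
      exact le_min ((hiter_mono n f V hfV x).trans (hiterK n x))
        (hiter_const n N f hfN x)
    have hlim : Tendsto
        (fun n : ℕ => ∫⁻ x, min (ENNReal.ofReal (ρ ^ n) * V x + K) N ∂ν)
        atTop (nhds (∫⁻ x, min K (N : ℝ≥0∞) ∂ν)) := by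
      apply tendsto_lintegral_of_dominated_convergence (fun _ => (N : ℝ≥0∞))
      · intro n
        exact ((measurable_const.mul hVmeas).add measurable_const).min measurable_const
      · intro n
        exact Filter.Eventually.of_forall fun x => min_le_right _ _
      · rw [lintegral_const, measure_univ, mul_one]
        exact ENNReal.natCast_ne_top N
      · refine Filter.Eventually.of_forall fun x => ?_
        have h1 : Tendsto (fun n : ℕ => ENNReal.ofReal (ρ ^ n) * V x) atTop (nhds 0) := by
          have h2 : Tendsto (fun n : ℕ => (ENNReal.ofReal ρ) ^ n) atTop (nhds 0) :=
            ENNReal.tendsto_pow_atTop_nhds_zero_of_lt_one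
              (ENNReal.ofReal_lt_one.mpr hρ1)
          have h3 := ENNReal.Tendsto.mul_const h2 (Or.inr (hVlt x).ne)
          rw [zero_mul] at h3
          simpa [ENNReal.ofReal_pow hρ0] using h3
        have h4 : Tendsto (fun n : ℕ => ENNReal.ofReal (ρ ^ n) * V x + K) atTop
            (nhds K) := by
          have := h1.add (tendsto_const_nhds (x := K))
          rwa [zero_add] at this
        exact h4.min tendsto_const_nhds
    have hle : ∫⁻ x, f x ∂ν ≤ ∫⁻ x, min K (N : ℝ≥0∞) ∂ν :=
      ge_of_tendsto hlim (Filter.Eventually.of_forall key)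
    calc ∫⁻ x, f x ∂ν ≤ ∫⁻ x, min K (N : ℝ≥0∞) ∂ν := hle
      _ ≤ ∫⁻ _, K ∂ν := lintegral_mono fun x => min_le_left _ _
      _ = K := by rw [lintegral_const, measure_univ, mul_one]
  -- the Lyapunov function is integrable
  have hVint : ∫⁻ x, V x ∂ν ≤ K := by
    have hVsup : ∀ x, (⨆ n : ℕ, min (V x) n) = V x := by
      intro x
      apply le_antisymm (iSup_le fun n => min_le_left _ _)
      obtain ⟨n, hn⟩ := ENNReal.exists_nat_gt (hVlt x).ne
      exact le_iSup_of_le n (le_min le_rfl hn.le)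
    have hmono : Monotone fun (n : ℕ) (x : X) => min (V x) (n : ℝ≥0∞) := by
      intro m n hmn x
      exact min_le_min le_rfl (Nat.cast_le.mpr hmn)
    have : ∫⁻ x, V x ∂ν = ⨆ n : ℕ, ∫⁻ x, min (V x) n ∂ν := by
      rw [← lintegral_iSup (fun n => hVmeas.min measurable_const) hmono]
      refine lintegral_congr fun x => (hVsup x).symm
    rw [this]
    exact iSup_le hbound
  -- conclusion
  have hfinal : ∀ x : X, ENNReal.ofReal (max (Real.log (dist x x₀)) 0)
      ≤ ENNReal.ofReal s⁻¹ * V x := by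
    intro x
    rw [hVdef]
    simp only
    rw [← ENNReal.ofReal_mul (inv_nonneg.mpr hs0.le)]
    exact ENNReal.ofReal_le_ofReal (aux_logplus_le dist_nonneg hs0)
  calc ∫⁻ x, ENNReal.ofReal (max (Real.log (dist x x₀)) 0) ∂ν
      ≤ ∫⁻ x, ENNReal.ofReal s⁻¹ * V x ∂ν := lintegral_mono hfinal
    _ = ENNReal.ofReal s⁻¹ * ∫⁻ x, V x ∂ν := lintegral_const_mul _ hVmeas
    _ < ⊤ := ENNReal.mul_lt_top ENNReal.ofReal_lt_top
        (lt_of_le_of_lt hVint ENNReal.ofReal_lt_top)
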